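/- For α = 1, the sequence defined by z₀ = x ≥ 1 and z_{k+1} = x + 1 − 1/z_k has the closed-form solution z_n(x) = [((x+2)√(x−1) + x√(x+3))(√(x+3)+√(x−1))^{2n} − ((x+2)√(x−1) − x√(x+3))(√(x+3)−√(x−1))^{2n}] / [(√(x−1)+√(x+3))^{2n+1} + (√(x+3)−√(x−1))^{2n+1}] for x > 1. -/

import Mathlib

lemma key_poly (a b u v : ℝ) (h : a^2 = b^2 + 4) :
    ((b^2+2) * (((b^2+3)*b + (b^2+1)*a)*u + ((b^2+1)*a - (b^2+3)*b)*v)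
      - ((a+b)*u + (a-b)*v))
    * ((a+b)^3*u + (a-b)^3*v)
    = (((b^2+3)*b + (b^2+1)*a)*(a+b)^2*u + ((b^2+1)*a - (b^2+3)*b)*(a-b)^2*v)
      * (((b^2+3)*b + (b^2+1)*a)*u + ((b^2+1)*a - (b^2+3)*b)*v) := by
  linear_combination (b^4*(u-v)^2 + 2*a*b^3*(u^2-v^2) + a^2*b^2*(u+v)^2) * h

/-- for α = 1, the sequence z₀ = x, z_{k+1} = x + 1 − 1/z_k has the
stated closed-form solution for x > 1. -/
theorem stmt13 (x : ℝ) (hx : 1 < x)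
    (z : ℕ → ℝ) (hz0 : z 0 = x) (hrec : ∀ k, z (k+1) = x + 1 - 1/(z k)) :
    ∀ n : ℕ, z n =
      (((x+2)*Real.sqrt (x-1) + x*Real.sqrt (x+3)) * (Real.sqrt (x+3) + Real.sqrt (x-1))^(2*n)
        - ((x+2)*Real.sqrt (x-1) - x*Real.sqrt (x+3)) * (Real.sqrt (x+3) - Real.sqrt (x-1))^(2*n))
      / ((Real.sqrt (x-1) + Real.sqrt (x+3))^(2*n+1)
        + (Real.sqrt (x+3) - Real.sqrt (x-1))^(2*n+1)) := by
  set a := Real.sqrt (x+3) with ha_def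
  set b := Real.sqrt (x-1) with hb_def
  have hb2 : b^2 = x - 1 := Real.sq_sqrt (by linarith)
  have ha2 : a^2 = b^2 + 4 := by rw [hb2, Real.sq_sqrt (by linarith)]; ring
  have hxb : x = b^2 + 1 := by rw [hb2]; ring
  have hbpos : 0 < b := Real.sqrt_pos.2 (by linarith)
  have hapos : 0 < a := Real.sqrt_pos.2 (by linarith)
  have hab : b < a := by nlinarith
  have hPpos : 0 < (x+2)*b + x*a := by nlinarith
  have hQpos : 0 < x*a - (x+2)*b := by nlinarith [sq_nonneg (x*a - (x+2)*b), sq_nonneg (x*a + (x+2)*b)]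
  intro n
  induction n with
  | zero =>
    simp only [Nat.mul_zero, pow_zero, pow_one, hz0]
    rw [mul_one, mul_one, show (b+a)^(0+1) + (a-b)^(0+1) = 2*a by ring,
      show (x+2)*b + x*a - ((x+2)*b - x*a) = x*(2*a) by ring,
      mul_div_assoc, div_self (by positivity), mul_one]
  | succ n ih =>
    set u := (a+b)^(2*n) with hu_def
    set v := (a-b)^(2*n) with hv_def
    have hupos : 0 < u := pow_pos (by linarith) _
    have hvpos : 0 < v := pow_pos (by linarith) _
    have hampos : 0 < a - b := by linarith
    have hN : ((x+2)*b + x*a)*u - ((x+2)*b - x*a)*v > 0 := by nlinarith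
    have hD : (a+b)*u + (a-b)*v > 0 := by positivity
    have hDeq : (b+a)^(2*n+1) + (a-b)^(2*n+1) = (a+b)*u + (a-b)*v := by
      rw [hu_def, hv_def]; ring
    have ihD : z n = (((x+2)*b + x*a)*u - ((x+2)*b - x*a)*v) / ((a+b)*u + (a-b)*v) := by
      rw [ih, hDeq]
    have hzn : 0 < z n := by rw [ihD]; positivity
    have key := key_poly a b u v ha2
    have hN' : ((x+2)*b + x*a)*u - ((x+2)*b - x*a)*v
        = ((b^2+3)*b + (b^2+1)*a)*u + ((b^2+1)*a - (b^2+3)*b)*v := by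
      rw [hxb]; ring
    -- rewrite goal powers
    have e1 : (a+b)^(2*(n+1)) = (a+b)^2 * u := by rw [hu_def]; ring
    have e2 : (a-b)^(2*(n+1)) = (a-b)^2 * v := by rw [hv_def]; ring
    have e3 : (b+a)^(2*(n+1)+1) = (a+b)^3 * u := by rw [hu_def]; ring
    have e4 : (a-b)^(2*(n+1)+1) = (a-b)^3 * v := by rw [hv_def]; ring
    rw [hrec, ihD, e1, e2, e3, e4]
    have hDne : (a+b)*u + (a-b)*v ≠ 0 := ne_of_gt hD
    have hNne : ((x+2)*b + x*a)*u - ((x+2)*b - x*a)*v ≠ 0 := ne_of_gt hN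
    have hD'pos : 0 < (a+b)^3*u + (a-b)^3*v := by positivity
    rw [one_div_div, hxb]
    rw [hxb] at hNne
    have hD2ne : (a+b)^3*u + (a-b)^3*v ≠ 0 := ne_of_gt hD'pos
    rw [sub_div' hNne, div_eq_div_iff hNne hD2ne]
    linear_combination key
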